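/- Assume T = Σ_j p_j is a power of 2. For every feasible solution x to (IP1) there exists a feasible solution y to (IP2) whose cost is at most 8 times the cost of x. -/

import Mathlib

/-- The procedure `FormSegments`, starting at stage `s` with current time `t`, stopping
once `t ≥ T`.  Each produced entry `(s, a, b)` records the stage `s` at which the
interval `[a, b]` was appended. -/
def segAux (T : ℕ) (s t : ℕ) : List (ℕ × ℕ × ℕ) :=
  if h : t < T then
    if 2 ^ (s + 1) ∣ t then
      (s, t, t + 2 ^ s) :: (s, t + 2 ^ s, t + 2 ^ (s + 1)) ::
        segAux T (s + 1) (t + 2 ^ (s + 1))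
    else
      (s, t, t + 2 ^ s) :: segAux T (s + 1) (t + 2 ^ s)
  else []
termination_by T - t
decreasing_by
  · have h1 : 0 < 2 ^ (s + 1) := Nat.pow_pos (by norm_num)
    omega
  · have h1 : 0 < 2 ^ s := Nat.pow_pos (by norm_num)
    omega

/-- `Seg T r` : the sequence of intervals of `Seg(r)` (forgetting the stages). -/
def Seg (T rj : ℕ) : List (ℕ × ℕ) := (segAux T 0 rj).map fun x => (x.2.1, x.2.2)

/-- `segOf T rj t` : the (unique) segment of `Seg(rj)` containing slot `t`. -/
def segOf (T rj t : ℕ) : ℕ × ℕ :=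
  ((Seg T rj).find? fun S => decide (S.1 ≤ t ∧ t + 1 ≤ S.2)).getD (0, 0)

/-- (IP1) feasibility for the weighted flow-time integer program. -/
def IP1Feasible {J : Type} [Fintype J] (p r : J → ℕ) (T : ℕ) (x : J → ℕ → ℕ) : Prop :=
  (∀ j t, r j ≤ t → t ≤ T → x j t ≤ 1) ∧
  (∀ j t, r j < t → t ≤ T → x j t ≤ x j (t - 1)) ∧
  (∀ s t : ℕ, s ≤ t → t ≤ T →
    (∑ j ∈ Finset.univ.filter fun j => s ≤ r j ∧ r j ≤ t, (p j : ℤ)) - ((t : ℤ) - (s : ℤ))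
      ≤ ∑ j ∈ Finset.univ.filter fun j => s ≤ r j ∧ r j ≤ t, (p j : ℤ) * (x j t : ℤ))

/-- Cost of an (IP1) solution: `∑_j ∑_{t = r_j}^{T} w_j · x_{j,t}`. -/
def IP1Cost {J : Type} [Fintype J] (w : J → ℚ) (r : J → ℕ) (T : ℕ) (x : J → ℕ → ℕ) : ℚ :=
  ∑ j, ∑ t ∈ Finset.Icc (r j) T, w j * (x j t : ℚ)

/-- (IP2) feasibility: `y j S ∈ {0,1}` for each job segment `(j, S)` with `S ∈ Seg(r j)`,
and for every interval `I = [s,t]` with `0 ≤ s ≤ t < T`,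
`∑_{j ∈ J(I)} p j · y (j, S_j(t)) ≥ p(J(I)) − (t − s)`, where `S_j(t)` is the segment
of `Seg(r j)` containing slot `t`. -/
def IP2Feasible {J : Type} [Fintype J] (p r : J → ℕ) (T : ℕ) (y : J → ℕ × ℕ → ℕ) : Prop :=
  (∀ j S, S ∈ Seg T (r j) → y j S ≤ 1) ∧
  (∀ s t : ℕ, s ≤ t → t < T →
    (∑ j ∈ Finset.univ.filter fun j => s ≤ r j ∧ r j ≤ t, (p j : ℤ)) - ((t : ℤ) - (s : ℤ))
      ≤ ∑ j ∈ Finset.univ.filter fun j => s ≤ r j ∧ r j ≤ t,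
          (p j : ℤ) * (y j (segOf T (r j) t) : ℤ))

/-- Cost of an (IP2) solution: `∑_j ∑_{S ∈ Seg(j)} w_j · l(S) · y (j, S)`. -/
def IP2Cost {J : Type} [Fintype J] (w : J → ℚ) (r : J → ℕ) (T : ℕ)
    (y : J → ℕ × ℕ → ℕ) : ℚ :=
  ∑ j, ((Seg T (r j)).map fun S => w j * ((S.2 - S.1 : ℕ) : ℚ) * (y j S : ℚ)).sum

/-- if `T = ∑_j p_j` is a power of two, then every feasible solution `x`
of (IP1) yields a feasible solution `y` of (IP2) of cost at most `8` times the cost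
of `x`. -/
lemma segAux_mem {T : ℕ} : ∀ s t : ℕ, ∀ e ∈ segAux T s t,
    t ≤ e.2.1 ∧ e.2.2 = e.2.1 + 2 ^ e.1 := by
  intro s t
  induction s, t using segAux.induct T with
  | case1 s t h hdvd ih =>
    intro e he
    rw [segAux, dif_pos h, if_pos hdvd] at he
    have h1 : 0 < 2 ^ s := Nat.pow_pos (by norm_num)
    simp only [List.mem_cons] at he
    rcases he with rfl | rfl | he
    · simp
    · simp only [pow_succ]; omega
    · have := ih e he
      have h2 : 0 < 2 ^ (s+1) := Nat.pow_pos (by norm_num)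
      exact ⟨by omega, this.2⟩
  | case2 s t h hdvd ih =>
    intro e he
    rw [segAux, dif_pos h, if_neg hdvd] at he
    have h1 : 0 < 2 ^ s := Nat.pow_pos (by norm_num)
    simp only [List.mem_cons] at he
    rcases he with rfl | he
    · simp
    · have := ih e he
      exact ⟨by omega, this.2⟩
  | case3 s t h =>
    intro e he
    rw [segAux, dif_neg h] at he
    simp at he

lemma segAux_start_le {ℓ T : ℕ} (hT : T = 2 ^ ℓ) : ∀ s t : ℕ, 2 ^ s ≤ t + 1 →
    ∀ e ∈ segAux T s t, e.2.1 ≤ T := by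
  intro s t
  induction s, t using segAux.induct T with
  | case1 s t h hdvd ih =>
    intro ht e he
    rw [segAux, dif_pos h, if_pos hdvd] at he
    have h1 : 0 < 2 ^ s := Nat.pow_pos (by norm_num)
    have key : t + 2 ^ s ≤ T := by
      rcases Nat.eq_zero_or_pos s with rfl | hs
      · simpa using h
      · have h2 : 2 ≤ 2 ^ s := by
          calc 2 = 2 ^ 1 := rfl
          _ ≤ 2 ^ s := Nat.pow_le_pow_right (by norm_num) hs
        have htpos : 0 < t := by omega
        have hle : 2 ^ (s+1) ≤ t := Nat.le_of_dvd htpos hdvd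
        have hlt : s + 1 < ℓ := by
          have : 2 ^ (s+1) < 2 ^ ℓ := by omega
          exact (Nat.pow_lt_pow_iff_right (by norm_num)).mp this
        have hdT : 2 ^ (s+1) ∣ T := hT ▸ pow_dvd_pow 2 hlt.le
        have hsub : 2 ^ (s+1) ∣ T - t := Nat.dvd_sub hdT hdvd
        have h3 : 2 ^ (s+1) ≤ T - t := Nat.le_of_dvd (by omega) hsub
        have h4 : 2 ^ (s+1) = 2 * 2 ^ s := by ring
        omega
    simp only [List.mem_cons] at he
    rcases he with rfl | rfl | he
    · exact h.le
    · exact key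
    · exact ih (by omega) e he
  | case2 s t h hdvd ih =>
    intro ht e he
    rw [segAux, dif_pos h, if_neg hdvd] at he
    have h1 : 0 < 2 ^ s := Nat.pow_pos (by norm_num)
    have h4 : 2 ^ (s+1) = 2 * 2 ^ s := by ring
    simp only [List.mem_cons] at he
    rcases he with rfl | he
    · exact h.le
    · exact ih (by omega) e he
  | case3 s t h =>
    intro _ e he
    rw [segAux, dif_neg h] at he
    simp at he

lemma segAux_cover {T : ℕ} (t : ℕ) (h2 : t < T) : ∀ s t0 : ℕ, t0 ≤ t →
    ∃ e ∈ segAux T s t0, e.2.1 ≤ t ∧ t + 1 ≤ e.2.2 := by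
  intro s t0
  induction s, t0 using segAux.induct T with
  | case1 s t0 h hdvd ih =>
    intro h1
    rw [segAux, dif_pos h, if_pos hdvd]
    have hp : 0 < 2 ^ s := Nat.pow_pos (by norm_num)
    have h4 : 2 ^ (s+1) = 2 * 2 ^ s := by ring
    by_cases hc : t < t0 + 2 ^ s
    · exact ⟨(s, t0, t0 + 2 ^ s), by simp, by simp; omega⟩
    · by_cases hc2 : t < t0 + 2 ^ (s+1)
      · exact ⟨(s, t0 + 2 ^ s, t0 + 2 ^ (s+1)), by simp, by simp; omega⟩
      · obtain ⟨e, he, hprop⟩ := ih (by omega)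
        exact ⟨e, by simp [he], hprop⟩
  | case2 s t0 h hdvd ih =>
    intro h1
    rw [segAux, dif_pos h, if_neg hdvd]
    have hp : 0 < 2 ^ s := Nat.pow_pos (by norm_num)
    by_cases hc : t < t0 + 2 ^ s
    · exact ⟨(s, t0, t0 + 2 ^ s), by simp, by simp; omega⟩
    · obtain ⟨e, he, hprop⟩ := ih (by omega)
      exact ⟨e, by simp [he], hprop⟩
  | case3 s t0 h =>
    intro h1
    omega

lemma segAux_sum_zero {T m : ℕ} {s t : ℕ} (h : m < t) :
    ((segAux T s t).map fun e => if e.2.1 ≤ m then e.2.2 - e.2.1 else 0).sum = 0 := by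
  apply List.sum_eq_zero
  intro a ha
  simp only [List.mem_map] at ha
  obtain ⟨e, he, rfl⟩ := ha
  have := (segAux_mem s t e he).1
  rw [if_neg (by omega)]

lemma segAux_sum {T m : ℕ} : ∀ s t : ℕ, t ≤ m →
    ((segAux T s t).map fun e => if e.2.1 ≤ m then e.2.2 - e.2.1 else 0).sum + 2 * t
      ≤ 2 * m + 2 ^ s := by
  intro s t
  induction s, t using segAux.induct T with
  | case1 s t h hdvd ih =>
    intro h1
    rw [segAux, dif_pos h, if_pos hdvd]
    have hp : 0 < 2 ^ s := Nat.pow_pos (by norm_num)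
    have h4 : 2 ^ (s+1) = 2 * 2 ^ s := by ring
    simp only [List.map_cons, List.sum_cons]
    by_cases hc : t + 2 ^ (s+1) ≤ m
    · have := ih hc
      have hg2 : (if t + 2 ^ s ≤ m then (t + 2 ^ (s+1)) - (t + 2 ^ s) else 0) ≤ 2 ^ s := by
        split <;> omega
      rw [if_pos h1]
      omega
    · have hz := segAux_sum_zero (T := T) (m := m) (s := s+1) (t := t + 2 ^ (s+1)) (by omega)
      rw [hz, if_pos h1]
      by_cases hc2 : t + 2 ^ s ≤ m
      · rw [if_pos hc2]; omega
      · rw [if_neg hc2]; omega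
  | case2 s t h hdvd ih =>
    intro h1
    rw [segAux, dif_pos h, if_neg hdvd]
    have hp : 0 < 2 ^ s := Nat.pow_pos (by norm_num)
    have h4 : 2 ^ (s+1) = 2 * 2 ^ s := by ring
    simp only [List.map_cons, List.sum_cons]
    rw [if_pos h1]
    by_cases hc : t + 2 ^ s ≤ m
    · have := ih hc
      omega
    · have hz := segAux_sum_zero (T := T) (m := m) (s := s+1) (t := t + 2 ^ s) (by omega)
      rw [hz]
      omega
  | case3 s t h =>
    intro h1
    rw [segAux, dif_neg h]
    have hp : 0 < 2 ^ s := Nat.pow_pos (by norm_num)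
    simp only [List.map_nil, List.sum_nil, Nat.zero_add]
    omega

lemma list_cost_eq (w : ℚ) (f : ℕ → ℕ) : ∀ L : List (ℕ × ℕ),
    (L.map fun S => w * ((S.2 - S.1 : ℕ) : ℚ) * ((f S.1 : ℕ) : ℚ)).sum
      = w * (((L.map fun S => (S.2 - S.1) * f S.1).sum : ℕ) : ℚ) := by
  intro L
  induction L with
  | nil => simp
  | cons a L ih =>
    simp only [List.map_cons, List.sum_cons, ih]
    push_cast
    ring

theorem stmt10 {J : Type} [Fintype J] (p r : J → ℕ) (w : J → ℚ)
    (hp : ∀ j, 1 ≤ p j) (hw : ∀ j, 0 ≤ w j)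
    (ℓ T : ℕ) (hT : T = ∑ j, p j) (hT2 : T = 2 ^ ℓ)
    (hrT : ∀ j, r j < T)
    (hbusy : ∀ t : ℕ, 1 ≤ t → t ≤ T →
      t ≤ ∑ j ∈ Finset.univ.filter fun j => r j < t, p j)
    (x : J → ℕ → ℕ) (hx : IP1Feasible p r T x) :
    ∃ y : J → ℕ × ℕ → ℕ, IP2Feasible p r T y ∧
      IP2Cost w r T y ≤ 8 * IP1Cost w r T x := by
  obtain ⟨hx1, hx2, hx3⟩ := hx
  have hmono : ∀ j a t, r j ≤ a → a ≤ t → t ≤ T → x j t ≤ x j a := by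
    intro j a t hra hat
    induction t, hat using Nat.le_induction with
    | base => intro _; exact le_rfl
    | succ t ht ih =>
      intro hT1
      have h2 := hx2 j (t + 1) (by omega) hT1
      simp only [Nat.add_sub_cancel] at h2
      exact le_trans h2 (ih (by omega))
  have hSeg : ∀ j S, S ∈ Seg T (r j) → r j ≤ S.1 ∧ S.1 ≤ T := by
    intro j S hS
    simp only [Seg, List.mem_map] at hS
    obtain ⟨e, he, rfl⟩ := hS
    exact ⟨(segAux_mem _ _ e he).1,
      segAux_start_le hT2 0 (r j) (by norm_num) e he⟩
  refine ⟨fun j S => x j S.1, ⟨?_, ?_⟩, ?_⟩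
  · intro j S hS
    exact hx1 j S.1 (hSeg j S hS).1 (hSeg j S hS).2
  · intro s t hst htT
    refine le_trans (hx3 s t hst htT.le) ?_
    apply Finset.sum_le_sum
    intro j hj
    simp only [Finset.mem_filter] at hj
    obtain ⟨e, he, h1, h2⟩ := segAux_cover t htT 0 (r j) hj.2.2
    have hmem : ((e.2.1, e.2.2) : ℕ × ℕ) ∈ Seg T (r j) :=
      List.mem_map_of_mem he
    have hex : ((Seg T (r j)).find? fun S => decide (S.1 ≤ t ∧ t + 1 ≤ S.2)).isSome := by
      rw [List.find?_isSome]
      exact ⟨(e.2.1, e.2.2), hmem, by simp [h1, h2]⟩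
    obtain ⟨S0, hS0⟩ := Option.isSome_iff_exists.mp hex
    have hS0mem : S0 ∈ Seg T (r j) := List.mem_of_find?_eq_some hS0
    have hS0prop : S0.1 ≤ t ∧ t + 1 ≤ S0.2 := by
      have := List.find?_some hS0
      simpa using this
    have hseg : segOf T (r j) t = S0 := by
      rw [segOf, hS0]; rfl
    rw [hseg]
    have hxle : x j t ≤ x j S0.1 :=
      hmono j S0.1 t (hSeg j S0 hS0mem).1 hS0prop.1 htT.le
    have hp0 : (0 : ℤ) ≤ (p j : ℤ) := by positivity
    exact mul_le_mul_of_nonneg_left (by exact_mod_cast hxle) hp0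
  · -- cost bound
    have costj : ∀ j,
        ((Seg T (r j)).map fun S => w j * ((S.2 - S.1 : ℕ) : ℚ) * ((x j S.1 : ℕ) : ℚ)).sum
          ≤ 8 * ∑ t ∈ Finset.Icc (r j) T, w j * (x j t : ℚ) := by
      intro j
      set A : ℕ := ∑ t ∈ Finset.Icc (r j) T, x j t with hA
      have hrhs : (8 : ℚ) * ∑ t ∈ Finset.Icc (r j) T, w j * (x j t : ℚ)
          = 8 * (w j * (A : ℚ)) := by
        rw [← Finset.mul_sum, hA]
        push_cast
        ring
      rw [list_cost_eq, hrhs]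
      set N : ℕ := ((Seg T (r j)).map fun S => (S.2 - S.1) * x j S.1).sum with hN
      have hkey : N ≤ 8 * A := by
        by_cases hA0 : A = 0
        · have hz : ∀ t ∈ Finset.Icc (r j) T, x j t = 0 := by
            intro t ht
            have := Finset.sum_eq_zero_iff.mp (hA ▸ hA0.symm).symm
            exact this t ht
          have : N = 0 := by
            rw [hN]
            apply List.sum_eq_zero
            intro a ha
            simp only [List.mem_map] at ha
            obtain ⟨S, hS, rfl⟩ := ha
            have h1 := hSeg j S hS
            rw [hz S.1 (Finset.mem_Icc.mpr h1)]
            simp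
          omega
        · have hA1 : 1 ≤ A := by omega
          set m : ℕ := r j + A - 1 with hm
          have hchar : ∀ a, r j ≤ a → a ≤ T → x j a = if a ≤ m then 1 else 0 := by
            intro a hra haT
            by_cases hxa : x j a = 0
            · have hub : A ≤ a - r j := by
                have hsplit : A = (∑ t ∈ Finset.Ico (r j) a, x j t)
                    + ∑ t ∈ Finset.Ico a (T + 1), x j t := by
                  rw [hA, ← Finset.Ico_add_one_right_eq_Icc]
                  exact (Finset.sum_Ico_consecutive _ hra (by omega)).symm
                have hz2 : ∑ t ∈ Finset.Ico a (T + 1), x j t = 0 := by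
                  apply Finset.sum_eq_zero
                  intro t ht
                  simp only [Finset.mem_Ico] at ht
                  have := hmono j a t hra ht.1 (by omega)
                  omega
                have hb : ∑ t ∈ Finset.Ico (r j) a, x j t
                    ≤ (Finset.Ico (r j) a).card * 1 := by
                  apply Finset.sum_le_card_nsmul
                  intro t ht
                  simp only [Finset.mem_Ico] at ht
                  exact hx1 j t ht.1 (by omega)
                simp only [Nat.card_Ico, mul_one] at hb
                omega
              rw [if_neg (by omega), hxa]
            · have hxa1 : x j a = 1 := by
                have := hx1 j a hra haT
                omega
              have hlb : a + 1 - r j ≤ A := by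
                have hones : ∀ t ∈ Finset.Icc (r j) a, x j t = 1 := by
                  intro t ht
                  simp only [Finset.mem_Icc] at ht
                  have h1 := hmono j t a ht.1 ht.2 haT
                  have h2 := hx1 j t ht.1 (by omega)
                  omega
                have : ∑ t ∈ Finset.Icc (r j) a, x j t = a + 1 - r j := by
                  rw [Finset.sum_congr rfl hones]
                  simp [Nat.card_Icc]
                calc a + 1 - r j = ∑ t ∈ Finset.Icc (r j) a, x j t := this.symm
                _ ≤ A := Finset.sum_le_sum_of_subset
                    (Finset.Icc_subset_Icc_right haT)
              rw [if_pos (by omega), hxa1]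
          have hNg : N = ((segAux T 0 (r j)).map
              fun e => if e.2.1 ≤ m then e.2.2 - e.2.1 else 0).sum := by
            rw [hN, Seg, List.map_map]
            congr 1
            apply List.map_congr_left
            intro e he
            simp only [Function.comp]
            have h1 := segAux_mem 0 (r j) e he
            have h2 := segAux_start_le hT2 0 (r j) (by norm_num) e he
            rw [hchar e.2.1 h1.1 h2]
            split <;> simp
          have hsum := segAux_sum (T := T) (m := m) 0 (r j) (by omega)
          rw [← hNg] at hsum
          simp only [pow_zero] at hsum
          omega
      calc w j * (N : ℚ) ≤ w j * ((8 * A : ℕ) : ℚ) := by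
            apply mul_le_mul_of_nonneg_left _ (hw j)
            exact_mod_cast hkey
      _ = 8 * (w j * (A : ℚ)) := by push_cast; ring
    rw [IP2Cost, IP1Cost, Finset.mul_sum]
    apply Finset.sum_le_sum
    intro j _
    exact costj j
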